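/- Let {s_k} be a strictly positive moment sequence with associated Krein–Langer string data defined via the subsequence k(j) enumerating indices with Δ_{1,k(j)} ≠ 0. Then the extended Stieltjes formulas hold: x_j = Σ_{i=0}^j l_i = Δ_{2,k(j)}/Δ_{0,k(j)}, Σ_{i=0}^{j−1} ω_i = −Δ_{−1,k(j)}/Δ_{1,k(j)}, and ∫_0^{x_j} w(x)² dx + Σ_{i=0}^{j−1} υ_i = −Δ_{−2,k(j)}/Δ_{0,k(j)}, where w is the piecewise-constant function with w(x) = Σ_{i: x_i < x} ω_i. -/

import Mathlib

open Matrix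

variable {R : Type*} [CommRing R] {m : ℕ}

/-- The reindexing equiv putting positions 0 and last first. -/
def cornerEquiv (m : ℕ) : Fin 2 ⊕ Fin m ≃ Fin (m + 2) where
  toFun x := Sum.elim (fun a => if a = 0 then 0 else Fin.last (m+1)) (fun i => i.succ.castSucc) x
  invFun x := if h : (x : ℕ) = 0 then Sum.inl 0 else if h2 : (x : ℕ) = m + 1 then Sum.inl 1
    else Sum.inr ⟨(x : ℕ) - 1, by omega⟩
  left_inv x := by
    rcases x with a | i
    · fin_cases a <;> simp [Fin.last]
    · have h1 : ((i.succ.castSucc : Fin (m+2)) : ℕ) = i + 1 := by simp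
      simp only [Sum.elim_inr, h1]
      have : ¬ ((i:ℕ) + 1 = 0) := by omega
      have h2 : ¬ ((i:ℕ) + 1 = m + 1) := by omega
      simp [this, h2]; omega
  right_inv x := by
    by_cases h : (x : ℕ) = 0
    · simp [h, show x = 0 from Fin.ext h]
    · by_cases h2 : (x : ℕ) = m + 1
      · simp [h, h2]
        exact (Fin.ext h2).symm
      · simp only [h, h2, dif_neg, not_false_iff]
        simp
        exact Fin.ext (show (x:ℕ) - 1 + 1 = x by omega)

lemma cornerEquiv_inl0 : cornerEquiv m (Sum.inl 0) = 0 := rfl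
lemma cornerEquiv_inl1 : cornerEquiv m (Sum.inl 1) = Fin.last (m+1) := rfl
lemma cornerEquiv_inr (i : Fin m) : cornerEquiv m (Sum.inr i) = i.succ.castSucc := rfl

lemma succ_castSucc_ne_zero (i : Fin m) : (i.succ.castSucc : Fin (m+2)) ≠ 0 := by
  simp [Fin.ext_iff]

lemma succ_castSucc_ne_last (i : Fin m) : (i.succ.castSucc : Fin (m+2)) ≠ Fin.last (m+1) := by
  simp [Fin.ext_iff]; omega

/-- Determinant of a matrix which agrees with the identity except in columns 0 and last. -/
lemma det_corner_cols (u v : Fin (m + 2) → R) :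
    (Matrix.of fun i j : Fin (m + 2) =>
      if j = 0 then u i else if j = Fin.last (m+1) then v i else if i = j then 1 else 0).det
      = u 0 * v (Fin.last (m+1)) - u (Fin.last (m+1)) * v 0 := by
  set C := (Matrix.of fun i j : Fin (m + 2) =>
      if j = 0 then u i else if j = Fin.last (m+1) then v i else if i = j then 1 else 0)
  have h0 : (0 : Fin (m+2)) ≠ Fin.last (m+1) := by simp [Fin.ext_iff]
  have hC : C.submatrix (cornerEquiv m) (cornerEquiv m) =
      Matrix.fromBlocks (Matrix.of ![![u 0, v 0], ![u (Fin.last (m+1)), v (Fin.last (m+1))]])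
        0 (Matrix.of fun i (b : Fin 2) =>
            if b = 0 then u i.succ.castSucc else v i.succ.castSucc) 1 := by
    ext x y
    rcases x with a | i <;> rcases y with b | j
    · fin_cases a <;> fin_cases b <;>
        simp [C, cornerEquiv_inl0, cornerEquiv_inl1, h0, h0.symm]
    · fin_cases a <;>
        simp [C, cornerEquiv_inl0, cornerEquiv_inl1, cornerEquiv_inr,
          (succ_castSucc_ne_zero j).symm, (succ_castSucc_ne_last j).symm, h0.symm,
          (succ_castSucc_ne_zero j), (succ_castSucc_ne_last j), (Fin.succ_ne_zero j.castSucc).symm,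
          (show Fin.last (m+1) ≠ j.castSucc.succ by
            rw [Ne, Fin.ext_iff, Fin.val_last, Fin.val_succ, Fin.val_castSucc]; omega)]
    · fin_cases b <;>
        simp [C, cornerEquiv_inl0, cornerEquiv_inl1, cornerEquiv_inr]
    · simp [C, cornerEquiv_inr, succ_castSucc_ne_zero, succ_castSucc_ne_last,
        Matrix.one_apply]
  have := Matrix.det_submatrix_equiv_self (cornerEquiv m) C
  rw [hC] at this
  rw [← this, Matrix.det_fromBlocks_zero₁₂]
  simp [Matrix.det_fin_two]
  ring

/-- Determinant of a matrix whose columns 0 and last are `d·e₀` and `d·e_last`. -/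
lemma det_corner_diag (A : Matrix (Fin (m + 2)) (Fin (m + 2)) R) (d : R) :
    (Matrix.of fun i j : Fin (m + 2) =>
      if j = 0 then (if i = 0 then d else 0)
      else if j = Fin.last (m+1) then (if i = Fin.last (m+1) then d else 0)
      else A i j).det
      = d ^ 2 * (A.submatrix (fun i : Fin m => i.succ.castSucc)
          (fun i : Fin m => i.succ.castSucc)).det := by
  set D := (Matrix.of fun i j : Fin (m + 2) =>
      if j = 0 then (if i = 0 then d else 0)
      else if j = Fin.last (m+1) then (if i = Fin.last (m+1) then d else 0)
      else A i j)
  have h0 : (0 : Fin (m+2)) ≠ Fin.last (m+1) := by simp [Fin.ext_iff]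
  have hD : D.submatrix (cornerEquiv m) (cornerEquiv m) =
      Matrix.fromBlocks (Matrix.of ![![d, 0], ![0, d]])
        (Matrix.of fun (a : Fin 2) j =>
          if a = 0 then A 0 j.succ.castSucc else A (Fin.last (m+1)) j.succ.castSucc)
        0 (A.submatrix (fun i : Fin m => i.succ.castSucc) (fun i : Fin m => i.succ.castSucc)) := by
    ext x y
    rcases x with a | i <;> rcases y with b | j
    · fin_cases a <;> fin_cases b <;>
        simp [D, cornerEquiv_inl0, cornerEquiv_inl1, h0, h0.symm]
    · fin_cases a <;>
        simp [D, cornerEquiv_inl0, cornerEquiv_inl1, cornerEquiv_inr,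
          (succ_castSucc_ne_zero j), (succ_castSucc_ne_last j)]
    · fin_cases b <;>
        simp [D, cornerEquiv_inl0, cornerEquiv_inl1, cornerEquiv_inr,
          succ_castSucc_ne_zero, succ_castSucc_ne_last, Fin.succ_ne_zero]
    · simp [D, cornerEquiv_inr, succ_castSucc_ne_zero, succ_castSucc_ne_last,
        Fin.succ_ne_zero]
  have := Matrix.det_submatrix_equiv_self (cornerEquiv m) D
  rw [hD] at this
  rw [← this, Matrix.det_fromBlocks_zero₂₁]
  simp [Matrix.det_fin_two]
  ring

/-- Desnanot–Jacobi (Dodgson condensation), invertible case. -/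
lemma dodgson_isUnit (A : Matrix (Fin (m + 2)) (Fin (m + 2)) R) (hA : IsUnit A.det) :
    A.det * (A.submatrix (fun i : Fin m => i.succ.castSucc)
        (fun i : Fin m => i.succ.castSucc)).det
      = (A.submatrix Fin.succ Fin.succ).det * (A.submatrix Fin.castSucc Fin.castSucc).det
        - (A.submatrix Fin.succ Fin.castSucc).det * (A.submatrix Fin.castSucc Fin.succ).det := by
  classical
  set l := Fin.last (m+1)
  set C := (Matrix.of fun i j : Fin (m + 2) =>
      if j = 0 then A.adjugate i 0 else if j = l then A.adjugate i l
      else if i = j then (1:R) else 0) with hCdef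
  have hmul : A * C = (Matrix.of fun i j : Fin (m + 2) =>
      if j = 0 then (if i = 0 then A.det else 0)
      else if j = l then (if i = l then A.det else 0)
      else A i j) := by
    ext i j
    rw [Matrix.mul_apply]
    by_cases hj0 : j = 0
    · subst hj0
      simp only [hCdef, Matrix.of_apply, if_pos rfl]
      have := congrArg (fun M => M i 0) (Matrix.mul_adjugate A)
      simpa [Matrix.mul_apply, Matrix.one_apply, mul_comm] using this
    · by_cases hjl : j = l
      · subst hjl
        have h0l : (l : Fin (m+2)) ≠ 0 := by simp [l, Fin.ext_iff]
        simp only [hCdef, Matrix.of_apply, if_neg h0l, if_pos rfl, hj0]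
        have := congrArg (fun M => M i l) (Matrix.mul_adjugate A)
        simp only [if_false, if_true]
        simpa [Matrix.mul_apply, Matrix.one_apply, mul_comm] using this
      · simp only [hCdef, Matrix.of_apply, if_neg hj0, if_neg hjl]
        simp [Finset.sum_ite_eq' Finset.univ j, hj0, hjl]
  have hdetAC : A.det * C.det = A.det * (A.det *
      (A.submatrix (fun i : Fin m => i.succ.castSucc) (fun i : Fin m => i.succ.castSucc)).det) := by
    rw [← Matrix.det_mul, hmul, det_corner_diag]
    ring
  have hdetC : C.det = A.det *
      (A.submatrix (fun i : Fin m => i.succ.castSucc) (fun i : Fin m => i.succ.castSucc)).det :=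
    hA.mul_left_cancel hdetAC
  have hu0 : A.adjugate 0 0 = (A.submatrix Fin.succ Fin.succ).det := by
    rw [Matrix.adjugate_fin_succ_eq_det_submatrix]
    simp [Fin.zero_succAbove]
  have hvl : A.adjugate l l = (A.submatrix Fin.castSucc Fin.castSucc).det := by
    rw [Matrix.adjugate_fin_succ_eq_det_submatrix]
    simp [l, Fin.succAbove_last, Even.neg_one_pow ⟨m+1, rfl⟩]
  have hul : A.adjugate l 0 = (-1:R) ^ (m+1) * (A.submatrix Fin.succ Fin.castSucc).det := by
    rw [Matrix.adjugate_fin_succ_eq_det_submatrix]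
    simp [l, Fin.succAbove_last, Fin.zero_succAbove]
  have hv0 : A.adjugate 0 l = (-1:R) ^ (m+1) * (A.submatrix Fin.castSucc Fin.succ).det := by
    rw [Matrix.adjugate_fin_succ_eq_det_submatrix]
    simp [l, Fin.succAbove_last, Fin.zero_succAbove]
  have := det_corner_cols (fun i => A.adjugate i 0) (fun i => A.adjugate i l) (R := R) (m := m)
  rw [show (Matrix.of fun i j : Fin (m + 2) =>
      if j = 0 then A.adjugate i 0 else if j = l then A.adjugate i l
      else if i = j then (1:R) else 0) = C from rfl] at this
  rw [hdetC] at this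
  rw [this, hu0, hvl, hul, hv0]
  have hsq : ((-1:R)^(m+1)) * ((-1:R)^(m+1)) = 1 := by
    rw [← pow_add]; exact Even.neg_one_pow ⟨m+1, rfl⟩
  linear_combination (-((A.submatrix Fin.succ Fin.castSucc).det *
    (A.submatrix Fin.castSucc Fin.succ).det)) * hsq

lemma map_det_eq {S T : Type*} [CommRing S] [CommRing T] {k : ℕ} (f : S →+* T)
    (N : Matrix (Fin k) (Fin k) S) : f N.det = (N.map f).det := by
  rw [RingHom.map_det]; rfl

lemma eval_det' {k : ℕ} (t : ℝ) (N : Matrix (Fin k) (Fin k) (Polynomial ℝ)) :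
    Polynomial.eval t N.det = (N.map (Polynomial.eval t)).det := by
  have := map_det_eq (Polynomial.evalRingHom t) N
  simpa [Polynomial.coe_evalRingHom] using this

open Polynomial in
/-- Desnanot–Jacobi over ℝ, general case, by polynomial perturbation. -/
lemma dodgson (A : Matrix (Fin (m + 2)) (Fin (m + 2)) ℝ) :
    A.det * (A.submatrix (fun i : Fin m => i.succ.castSucc)
        (fun i : Fin m => i.succ.castSucc)).det
      = (A.submatrix Fin.succ Fin.succ).det * (A.submatrix Fin.castSucc Fin.castSucc).det
        - (A.submatrix Fin.succ Fin.castSucc).det * (A.submatrix Fin.castSucc Fin.succ).det := by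
  classical
  set M : Matrix (Fin (m+2)) (Fin (m+2)) ℝ[X] :=
    A.map C + (X : ℝ[X]) • 1 with hM
  have hmap : ∀ t : ℝ, M.map (eval t) = A + t • 1 := by
    intro t
    ext i j
    by_cases h : i = j <;> simp [hM, Matrix.one_apply, h]
  have hq : M = Matrix.charmatrix (-A) := by
    ext i j
    by_cases h : i = j
    · subst h; simp [hM, Matrix.one_apply, add_comm]
    · simp [hM, Matrix.one_apply, h, Matrix.charmatrix_apply_ne _ _ _ h]
  have hqne : M.det ≠ 0 := by
    rw [hq]
    exact (Matrix.charpoly_monic (-A)).ne_zero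
  set p : ℝ[X] := M.det * (M.submatrix (fun i : Fin m => i.succ.castSucc)
        (fun i : Fin m => i.succ.castSucc)).det
      - ((M.submatrix Fin.succ Fin.succ).det * (M.submatrix Fin.castSucc Fin.castSucc).det
        - (M.submatrix Fin.succ Fin.castSucc).det * (M.submatrix Fin.castSucc Fin.succ).det)
    with hp
  have hroots : {t : ℝ | (M.det).IsRoot t}.Finite := finite_setOf_isRoot hqne
  have hpz : p = 0 := by
    by_contra hne
    have : {t : ℝ | p.IsRoot t}.Finite := finite_setOf_isRoot hne
    have hfin : ({t : ℝ | (M.det).IsRoot t} ∪ {t : ℝ | p.IsRoot t}).Finite := hroots.union this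
    obtain ⟨t, ht⟩ := hfin.infinite_compl.nonempty
    simp only [Set.mem_compl_iff, Set.mem_union, not_or, Set.mem_setOf_eq] at ht
    apply ht.2
    have hdet : (A + t • 1).det ≠ 0 := by
      rw [← hmap t, ← eval_det' t]
      exact ht.1
    have hid := dodgson_isUnit (A + t • 1) (isUnit_iff_ne_zero.mpr hdet)
    have heval : ∀ (r c : Fin (m+1) → Fin (m+2)),
        eval t (M.submatrix r c).det = ((A + t • 1).submatrix r c).det := by
      intro r c
      rw [eval_det' t, ← Matrix.submatrix_map, hmap]
    have heval2 : eval t (M.submatrix (fun i : Fin m => i.succ.castSucc)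
        (fun i : Fin m => i.succ.castSucc)).det = ((A + t • 1).submatrix
          (fun i : Fin m => i.succ.castSucc) (fun i : Fin m => i.succ.castSucc)).det := by
      rw [eval_det' t, ← Matrix.submatrix_map, hmap]
    have hevalM : eval t M.det = (A + t • 1).det := by
      rw [eval_det' t, hmap]
    simp only [IsRoot, hp, eval_sub, eval_mul, eval_add, heval, heval2, hevalM]
    rw [hid]; ring
  have h0 := congrArg (eval 0) hpz
  have hmap0 : M.map (eval 0) = A := by
    have := hmap 0
    simpa using this
  have heval : ∀ (r c : Fin (m+1) → Fin (m+2)),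
      eval 0 (M.submatrix r c).det = (A.submatrix r c).det := by
    intro r c
    rw [eval_det' 0, ← Matrix.submatrix_map, hmap0]
  have heval2 : eval 0 (M.submatrix (fun i : Fin m => i.succ.castSucc)
      (fun i : Fin m => i.succ.castSucc)).det = (A.submatrix
        (fun i : Fin m => i.succ.castSucc) (fun i : Fin m => i.succ.castSucc)).det := by
    rw [eval_det' 0, ← Matrix.submatrix_map, hmap0]
  have hevalM : eval 0 M.det = A.det := by
    rw [eval_det' 0, hmap0]
  simp only [hp, eval_sub, eval_mul, heval, heval2, hevalM, eval_zero] at h0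
  linarith [h0]

/-- Dodgson condensation for Hankel determinants. -/
lemma hankel_dodgson (g : ℕ → ℝ) (m : ℕ) :
    (Matrix.of fun i j : Fin (m+2) => g (i.1+j.1)).det *
        (Matrix.of fun i j : Fin m => g (i.1+j.1+2)).det
    = (Matrix.of fun i j : Fin (m+1) => g (i.1+j.1+2)).det *
        (Matrix.of fun i j : Fin (m+1) => g (i.1+j.1)).det
      - ((Matrix.of fun i j : Fin (m+1) => g (i.1+j.1+1)).det) ^ 2 := by
  have h := dodgson (Matrix.of fun i j : Fin (m+2) => g (i.1+j.1))
  have e1 : (Matrix.of fun i j : Fin (m+2) => g (i.1+j.1)).submatrix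
      (fun i : Fin m => i.succ.castSucc) (fun i : Fin m => i.succ.castSucc)
      = Matrix.of fun i j : Fin m => g (i.1+j.1+2) := by
    ext i j; simp only [Matrix.submatrix_apply, Matrix.of_apply, Fin.coe_castSucc, Fin.val_succ]
    congr 1; omega
  have e2 : (Matrix.of fun i j : Fin (m+2) => g (i.1+j.1)).submatrix Fin.succ Fin.succ
      = Matrix.of fun i j : Fin (m+1) => g (i.1+j.1+2) := by
    ext i j; simp only [Matrix.submatrix_apply, Matrix.of_apply, Fin.val_succ]
    congr 1; omega
  have e3 : (Matrix.of fun i j : Fin (m+2) => g (i.1+j.1)).submatrix Fin.castSucc Fin.castSucc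
      = Matrix.of fun i j : Fin (m+1) => g (i.1+j.1) := by
    ext i j; simp only [Matrix.submatrix_apply, Matrix.of_apply, Fin.coe_castSucc]
  have e4 : (Matrix.of fun i j : Fin (m+2) => g (i.1+j.1)).submatrix Fin.succ Fin.castSucc
      = Matrix.of fun i j : Fin (m+1) => g (i.1+j.1+1) := by
    ext i j; simp only [Matrix.submatrix_apply, Matrix.of_apply, Fin.coe_castSucc, Fin.val_succ]
    try (congr 1 <;> omega)
  have e5 : (Matrix.of fun i j : Fin (m+2) => g (i.1+j.1)).submatrix Fin.castSucc Fin.succ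
      = Matrix.of fun i j : Fin (m+1) => g (i.1+j.1+1) := by
    ext i j; simp only [Matrix.submatrix_apply, Matrix.of_apply, Fin.coe_castSucc, Fin.val_succ]
    try (congr 1 <;> omega)
  rw [e1, e2, e3, e4, e5] at h
  rw [h]; ring

open MeasureTheory

noncomputable section

/-- The Hankel determinant `Δ_{0,n} = det (s_{i+j})_{0 ≤ i,j ≤ n}`. -/
def hankel (s : ℕ → ℝ) (n : ℕ) : ℝ :=
  (Matrix.of fun i j : Fin (n + 1) => s (i.1 + j.1)).det

/-- `Δ_{0,n-1}` with the convention `Δ_{0,-1} = 1`. -/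
def hankelPrev (s : ℕ → ℝ) : ℕ → ℝ
  | 0 => 1
  | n + 1 => hankel s n

/-- `Δ_{1,n} = det (s_{1+i+j})_{0 ≤ i,j ≤ n−1}` (with `Δ_{1,0} = 1`). -/
def hankel1 (s : ℕ → ℝ) (n : ℕ) : ℝ :=
  (Matrix.of fun i j : Fin n => s (1 + i.1 + j.1)).det

/-- `Δ_{2,n} = det (s_{2+i+j})_{0 ≤ i,j ≤ n−1}` (with `Δ_{2,0} = 1`). -/
def hankel2 (s : ℕ → ℝ) (n : ℕ) : ℝ :=
  (Matrix.of fun i j : Fin n => s (2 + i.1 + j.1)).det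

/-- `Δ_{−1,n}`: the `(n+1)×(n+1)` determinant with top-left entry `0` and entries
`s_{i+j−1}` for `i+j ≥ 1` (so `Δ_{−1,0} = 0`). -/
def hankelm1 (s : ℕ → ℝ) (n : ℕ) : ℝ :=
  (Matrix.of fun i j : Fin (n + 1) =>
    if i.1 + j.1 = 0 then (0 : ℝ) else s (i.1 + j.1 - 1)).det

/-- `Δ_{−2,n}`: the `(n+2)×(n+2)` determinant with entries `0` for `i+j < 2` and
`s_{i+j−2}` for `i+j ≥ 2` (so `Δ_{−2,0} = 0`). -/
def hankelm2 (s : ℕ → ℝ) (n : ℕ) : ℝ :=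
  (Matrix.of fun i j : Fin (n + 2) =>
    if i.1 + j.1 < 2 then (0 : ℝ) else s (i.1 + j.1 - 2)).det

/-- `ρ` is a solution of the Hamburger moment problem with data `s`. -/
def IsMomentSolution (s : ℕ → ℝ) (ρ : Measure ℝ) : Prop :=
  ∀ k : ℕ, Integrable (fun x : ℝ => x ^ k) ρ ∧ (∫ x, x ^ k ∂ρ) = s k

/-- The orthonormal polynomial of the first kind `P_n`, via the determinant formula. -/
def Pn (s : ℕ → ℝ) (n : ℕ) (z : ℝ) : ℝ :=
  (Real.sqrt (hankelPrev s n * hankel s n))⁻¹ *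
    (Matrix.of fun i j : Fin (n + 1) =>
      if i.1 < n then s (i.1 + j.1) else z ^ j.1).det

/-- The polynomial of the second kind `Q_n(z) = ∫ (P_n(λ) − P_n(z))/(λ − z) dρ(λ)`. -/
def Qn (s : ℕ → ℝ) (ρ : Measure ℝ) (n : ℕ) (z : ℝ) : ℝ :=
  ∫ t, (if t = z then deriv (Pn s n) z else (Pn s n t - Pn s n z) / (t - z)) ∂ρ


section HankelFacts
variable (s : ℕ → ℝ)

/-- `g` for the `Δ_{-1}` family. -/
def gm1 : ℕ → ℝ := fun t => if t = 0 then 0 else s (t - 1)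

/-- `g` for the `Δ_{-2}` family. -/
def gm2 : ℕ → ℝ := fun t => if t < 2 then 0 else s (t - 2)

lemma hankel1_eq (n : ℕ) :
    hankel1 s n = (Matrix.of fun i j : Fin n => s (i.1 + j.1 + 1)).det := by
  have h : (Matrix.of fun i j : Fin n => s (1 + i.1 + j.1))
      = (Matrix.of fun i j : Fin n => s (i.1 + j.1 + 1)) := by
    ext i j; simp only [Matrix.of_apply]; congr 1 <;> omega
  unfold hankel1; rw [h]

lemma hankel2_eq (n : ℕ) :
    hankel2 s n = (Matrix.of fun i j : Fin n => s (i.1 + j.1 + 2)).det := by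
  have h : (Matrix.of fun i j : Fin n => s (2 + i.1 + j.1))
      = (Matrix.of fun i j : Fin n => s (i.1 + j.1 + 2)) := by
    ext i j; simp only [Matrix.of_apply]; congr 1 <;> omega
  unfold hankel2; rw [h]

lemma hankelm1_eq (n : ℕ) :
    hankelm1 s n = (Matrix.of fun i j : Fin (n+1) => gm1 s (i.1 + j.1)).det := by
  unfold hankelm1 gm1; congr 1

lemma hankelm2_eq (n : ℕ) :
    hankelm2 s n = (Matrix.of fun i j : Fin (n+2) => gm2 s (i.1 + j.1)).det := by
  unfold hankelm2 gm2; congr 1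

lemma identityI (n : ℕ) :
    hankel s (n+1) * hankel2 s n
      = hankel2 s (n+1) * hankel s n - (hankel1 s (n+1))^2 := by
  have h := hankel_dodgson s n
  rw [hankel1_eq, hankel2_eq, hankel2_eq]
  exact h

lemma identityII (n : ℕ) :
    hankelm1 s (n+1) * hankel1 s n
      = hankel1 s (n+1) * hankelm1 s n - (hankel s n)^2 := by
  have h := hankel_dodgson (gm1 s) n
  rw [hankelm1_eq, hankelm1_eq, hankel1_eq, hankel1_eq]
  have e2 : (Matrix.of fun i j : Fin n => gm1 s (i.1+j.1+2))
      = (Matrix.of fun i j : Fin n => s (i.1+j.1+1)) := by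
    ext i j; simp only [Matrix.of_apply, gm1]
    rw [if_neg (by omega)]; congr 1 <;> omega
  have e3 : (Matrix.of fun i j : Fin (n+1) => gm1 s (i.1+j.1+2))
      = (Matrix.of fun i j : Fin (n+1) => s (i.1+j.1+1)) := by
    ext i j; simp only [Matrix.of_apply, gm1]
    rw [if_neg (by omega)]; congr 1 <;> omega
  have e4 : (Matrix.of fun i j : Fin (n+1) => gm1 s (i.1+j.1+1))
      = (Matrix.of fun i j : Fin (n+1) => s (i.1+j.1)) := by
    ext i j; simp only [Matrix.of_apply, gm1]
    rw [if_neg (by omega)]; congr 1 <;> omega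
  rw [← e2, ← e3]
  rw [e4] at h
  have : hankel s n = (Matrix.of fun i j : Fin (n+1) => s (i.1+j.1)).det := rfl
  rw [this]
  exact h

lemma identityIII (n : ℕ) :
    hankelm2 s (n+1) * hankel s n
      = hankel s (n+1) * hankelm2 s n - (hankelm1 s (n+1))^2 := by
  have h := hankel_dodgson (gm2 s) (n+1)
  rw [hankelm2_eq, hankelm2_eq, hankelm1_eq]
  have e2 : ∀ m : ℕ, (Matrix.of fun i j : Fin m => gm2 s (i.1+j.1+2))
      = (Matrix.of fun i j : Fin m => s (i.1+j.1)) := by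
    intro m; ext i j; simp only [Matrix.of_apply, gm2]
    rw [if_neg (by omega)]; congr 1 <;> omega
  have e4 : (Matrix.of fun i j : Fin (n+2) => gm2 s (i.1+j.1+1))
      = (Matrix.of fun i j : Fin (n+2) => gm1 s (i.1+j.1)) := by
    ext i j; simp only [Matrix.of_apply, gm2, gm1]
    by_cases hz : (i:ℕ) + (j:ℕ) = 0
    · rw [if_pos (by omega), if_pos hz]
    · rw [if_neg (by omega), if_neg hz]; congr 1 <;> omega
  rw [e2, e2, e4] at h
  have h1 : hankel s n = (Matrix.of fun i j : Fin (n+1) => s (i.1+j.1)).det := rfl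
  have h2 : hankel s (n+1) = (Matrix.of fun i j : Fin (n+2) => s (i.1+j.1)).det := rfl
  rw [h1, h2]
  exact h

lemma hankel1_zero : hankel1 s 0 = 1 := Matrix.det_fin_zero

lemma hankel2_zero : hankel2 s 0 = 1 := Matrix.det_fin_zero

lemma hankelm1_zero : hankelm1 s 0 = 0 := by
  unfold hankelm1
  rw [Matrix.det_fin_one]
  simp

lemma hankelm2_zero : hankelm2 s 0 = 0 := by
  unfold hankelm2
  rw [Matrix.det_fin_two]
  norm_num

end HankelFacts

section PQ
variable (s : ℕ → ℝ)

/-- minor of the `P_n` determinant obtained by deleting the last row and column `j`. -/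
def pminor (n : ℕ) (j : Fin (n+1)) : ℝ :=
  (Matrix.of fun i' j' : Fin n => s (i'.1 + (j.succAbove j').1)).det

lemma det_lastRow (n : ℕ) (r : Fin (n+1) → ℝ) :
    (Matrix.of fun i j : Fin (n+1) => if i.1 < n then s (i.1+j.1) else r j).det
      = ∑ j : Fin (n+1), (-1:ℝ)^(n+j.1) * r j * pminor s n j := by
  rw [Matrix.det_succ_row _ (Fin.last n)]
  apply Finset.sum_congr rfl
  intro j _
  have h1 : (Matrix.of fun i j : Fin (n+1) => if i.1 < n then s (i.1+j.1) else r j)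
      (Fin.last n) j = r j := by
    simp [Fin.last]
  have h2 : ((Matrix.of fun i j : Fin (n+1) => if i.1 < n then s (i.1+j.1) else r j).submatrix
      (Fin.last n).succAbove j.succAbove) = Matrix.of fun i' j' : Fin n =>
        s (i'.1 + (j.succAbove j').1) := by
    ext i' j'
    simp only [Matrix.submatrix_apply, Matrix.of_apply, Fin.succAbove_last, Fin.coe_castSucc]
    rw [if_pos i'.2]
  rw [h1, h2]
  rfl

lemma pminor_zero (n : ℕ) : pminor s n 0 = hankel1 s n := by
  unfold pminor hankel1
  have h : (Matrix.of fun i' j' : Fin n => s (i'.1 + (((0:Fin (n+1))).succAbove j').1))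
      = (Matrix.of fun i j : Fin n => s (1 + i.1 + j.1)) := by
    ext i j; simp only [Matrix.of_apply, Fin.zero_succAbove, Fin.val_succ]
    congr 1 <;> omega
  rw [h]

lemma Pn_eq (n : ℕ) (z : ℝ) :
    Pn s n z = (Real.sqrt (hankelPrev s n * hankel s n))⁻¹ *
      ∑ j : Fin (n+1), ((-1:ℝ)^(n+j.1) * pminor s n j) * z^j.1 := by
  unfold Pn
  rw [det_lastRow s n (fun j => z ^ j.1)]
  congr 1
  apply Finset.sum_congr rfl
  intro j _
  ring

lemma Pn_zero (n : ℕ) :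
    Pn s n 0 = (Real.sqrt (hankelPrev s n * hankel s n))⁻¹ * ((-1:ℝ)^n * hankel1 s n) := by
  rw [Pn_eq]
  congr 1
  rw [Fintype.sum_eq_single (0 : Fin (n+1))]
  · simp [pminor_zero]
  · intro j hj
    have : j.1 ≠ 0 := fun h => hj (Fin.ext h)
    simp [zero_pow this]

lemma det_lastRow_m1 (n : ℕ) :
    (Matrix.of fun i j : Fin (n+1) => if i.1 < n then s (i.1+j.1)
        else (if j.1 = 0 then 0 else s (j.1 - 1))).det
      = (-1:ℝ)^n * hankelm1 s n := by
  have key : (Matrix.of fun i j : Fin (n+1) => if i.1 < n then s (i.1+j.1)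
        else (if j.1 = 0 then 0 else s (j.1 - 1)))
      = (Matrix.of fun i j : Fin (n+1) =>
          if i.1 + j.1 = 0 then (0:ℝ) else s (i.1 + j.1 - 1)).submatrix (finRotate (n+1)) id := by
    ext i j
    by_cases h : (i : ℕ) < n
    · have hval : ((finRotate (n+1)) i : ℕ) = i + 1 := by
        rw [finRotate_succ_apply]
        rw [Fin.val_add_one_of_lt]
        exact Fin.lt_last_iff_ne_last.mpr (by simp [Fin.ext_iff]; omega)
      simp only [Matrix.submatrix_apply, Matrix.of_apply, id_eq, hval]
      rw [if_pos h, if_neg (by omega)]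
      congr 1
      omega
    · have hi : i = Fin.last n := by
        have := i.2; simp [Fin.ext_iff]; omega
      subst hi
      simp only [Matrix.submatrix_apply, Matrix.of_apply, id_eq, finRotate_last]
      rw [if_neg (by simp [Fin.last])]
      simp only [Fin.val_zero, Nat.zero_add, zero_add]
  rw [key, Matrix.det_permute]
  rw [sign_finRotate]
  unfold hankelm1
  push_cast
  ring

lemma Qn_zero (ρ : Measure ℝ) [IsFiniteMeasure ρ] (hρ : IsMomentSolution s ρ) (n : ℕ) :
    Qn s ρ n 0 = (Real.sqrt (hankelPrev s n * hankel s n))⁻¹ *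
      ((-1:ℝ)^n * hankelm1 s n) := by
  classical
  set c := (Real.sqrt (hankelPrev s n * hankel s n))⁻¹ with hc
  set a : Fin (n+1) → ℝ := fun j => (-1:ℝ)^(n+j.1) * pminor s n j with ha
  have hP : ∀ z, Pn s n z = c * ∑ j : Fin (n+1), a j * z^j.1 := fun z => Pn_eq s n z
  set q : ℝ → ℝ := fun t => ∑ j : Fin (n+1), (c * a j) * (if j.1 = 0 then 0 else t^(j.1-1))
    with hqdef
  have hPfun : (Pn s n) = fun z => ∑ j : Fin (n+1), (c * a j) * z ^ j.1 := by
    funext z; rw [hP z, Finset.mul_sum]; apply Finset.sum_congr rfl; intro j _; ring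
  have hderiv : HasDerivAt (Pn s n)
      (∑ j : Fin (n+1), (c * a j) * ((j.1 : ℝ) * (0:ℝ)^(j.1-1))) 0 := by
    rw [hPfun]
    apply HasDerivAt.fun_sum
    intro j _
    exact (hasDerivAt_pow j.1 0).const_mul (c * a j)
  have hd0 : deriv (Pn s n) 0 = q 0 := by
    rw [hderiv.deriv, hqdef]
    apply Finset.sum_congr rfl
    intro j _
    congr 1
    rcases j with ⟨jv, hj⟩
    match jv with
    | 0 => simp
    | 1 => simp
    | (m+2) => simp [zero_pow]
  have hfun : ∀ t, (if t = 0 then deriv (Pn s n) 0 else (Pn s n t - Pn s n 0)/(t - 0)) = q t := by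
    intro t
    by_cases ht : t = 0
    · rw [if_pos ht, ht, hd0]
    · rw [if_neg ht, sub_zero, div_eq_iff ht, hP, hP]
      rw [hqdef]
      simp only
      rw [Finset.sum_mul, Finset.mul_sum, Finset.mul_sum, ← Finset.sum_sub_distrib]
      apply Finset.sum_congr rfl
      intro j _
      rcases Nat.eq_zero_or_pos j.1 with h0 | hpos
      · rw [h0]; simp
      · rw [if_neg (by omega)]
        have hts : t ^ j.1 = t ^ (j.1 - 1) * t := by
          rw [← pow_succ]; congr 1; omega
        rw [zero_pow (by omega), hts]
        ring
  have hQ : Qn s ρ n 0 = ∫ t, q t ∂ρ := by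
    unfold Qn
    apply MeasureTheory.integral_congr_ae
    filter_upwards with t
    exact hfun t
  have hint : ∀ j : Fin (n+1),
      Integrable (fun t : ℝ => (c * a j) * (if j.1 = 0 then 0 else t^(j.1-1))) ρ := by
    intro j
    by_cases h0 : j.1 = 0
    · have he : (fun t : ℝ => (c * a j) * (if j.1 = 0 then 0 else t^(j.1-1)))
          = fun _ => (0:ℝ) := by
        funext t; rw [if_pos h0, mul_zero]
      rw [he]
      exact integrable_const 0
    · simp only [if_neg h0]
      exact ((hρ (j.1 - 1)).1.const_mul _)
  have hS : ∫ t, q t ∂ρ = ∑ j : Fin (n+1), (c * a j) * (if j.1 = 0 then 0 else s (j.1-1)) := by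
    rw [hqdef]
    rw [MeasureTheory.integral_finset_sum _ (fun j _ => hint j)]
    apply Finset.sum_congr rfl
    intro j _
    rw [MeasureTheory.integral_const_mul]
    congr 1
    by_cases h0 : j.1 = 0
    · simp [h0]
    · simp only [if_neg h0]
      exact (hρ (j.1-1)).2
  have hdet := det_lastRow s n (fun j : Fin (n+1) => if j.1 = 0 then (0:ℝ) else s (j.1 - 1))
  rw [det_lastRow_m1] at hdet
  rw [hQ, hS]
  have : ∑ j : Fin (n+1), (c * a j) * (if j.1 = 0 then 0 else s (j.1-1))
      = c * ∑ j : Fin (n+1), (-1:ℝ)^(n+j.1) * (if j.1 = 0 then (0:ℝ) else s (j.1 - 1))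
          * pminor s n j := by
    rw [Finset.mul_sum]
    apply Finset.sum_congr rfl
    intro j _
    rw [ha]
    ring
  rw [this, ← hdet]

end PQ

section Scalars
variable (s : ℕ → ℝ)

lemma hankelPrev_pos (h0 : ∀ n, 0 < hankel s n) : ∀ n, 0 < hankelPrev s n := by
  intro n
  cases n with
  | zero => exact one_pos
  | succ m => exact h0 m

lemma sqrt_c_pos (h0 : ∀ n, 0 < hankel s n) (n : ℕ) :
    0 < (Real.sqrt (hankelPrev s n * hankel s n))⁻¹ := by
  apply inv_pos.mpr
  apply Real.sqrt_pos.mpr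
  exact mul_pos (hankelPrev_pos s h0 n) (h0 n)

lemma c_sq (h0 : ∀ n, 0 < hankel s n) (n : ℕ) :
    ((Real.sqrt (hankelPrev s n * hankel s n))⁻¹)^2 = (hankelPrev s n * hankel s n)⁻¹ := by
  rw [inv_pow, Real.sq_sqrt (le_of_lt (mul_pos (hankelPrev_pos s h0 n) (h0 n)))]

lemma neg_one_pow_sq (n : ℕ) : ((-1:ℝ)^n)^2 = 1 := by
  rw [← pow_mul, mul_comm, pow_mul]
  norm_num

lemma Pn_zero_sq (h0 : ∀ n, 0 < hankel s n) (n : ℕ) :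
    (Pn s n 0)^2 = (hankel1 s n)^2 / (hankelPrev s n * hankel s n) := by
  rw [Pn_zero, mul_pow, mul_pow, c_sq s h0, neg_one_pow_sq, one_mul]
  rw [div_eq_inv_mul]

lemma Qn_zero_sq (h0 : ∀ n, 0 < hankel s n) (ρ : Measure ℝ) [IsFiniteMeasure ρ]
    (hρ : IsMomentSolution s ρ) (n : ℕ) :
    (Qn s ρ n 0)^2 = (hankelm1 s n)^2 / (hankelPrev s n * hankel s n) := by
  rw [Qn_zero s ρ hρ, mul_pow, mul_pow, c_sq s h0, neg_one_pow_sq, one_mul]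
  rw [div_eq_inv_mul]

lemma PQ_ratio (h0 : ∀ n, 0 < hankel s n) (ρ : Measure ℝ) [IsFiniteMeasure ρ]
    (hρ : IsMomentSolution s ρ) (n : ℕ) :
    Qn s ρ n 0 / Pn s n 0 = hankelm1 s n / hankel1 s n := by
  rw [Qn_zero s ρ hρ, Pn_zero]
  rw [mul_div_mul_left _ _ (ne_of_gt (sqrt_c_pos s h0 n))]
  rw [mul_div_mul_left _ _ (pow_ne_zero n (show (-1:ℝ) ≠ 0 by norm_num))]

lemma Pn_zero_ne (h0 : ∀ n, 0 < hankel s n) {n : ℕ} (hd1 : hankel1 s n ≠ 0) :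
    Pn s n 0 ≠ 0 := by
  rw [Pn_zero]
  exact mul_ne_zero (ne_of_gt (sqrt_c_pos s h0 n))
    (mul_ne_zero (pow_ne_zero _ (by norm_num)) hd1)

lemma Pn_zero_of_d1 (n : ℕ) (hd1 : hankel1 s n = 0) : Pn s n 0 = 0 := by
  rw [Pn_zero, hd1, mul_zero, mul_zero]

lemma sumP (h0 : ∀ n, 0 < hankel s n) :
    ∀ N, ∑ n ∈ Finset.range (N+1), (Pn s n 0)^2 = hankel2 s N / hankel s N := by
  intro N
  induction N with
  | zero =>
    rw [Finset.sum_range_one, Pn_zero_sq s h0, hankel1_zero, hankel2_zero]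
    show 1^2 / ((1:ℝ) * hankel s 0) = 1 / hankel s 0
    rw [one_pow, one_mul]
  | succ N ih =>
    rw [Finset.sum_range_succ, ih, Pn_zero_sq s h0]
    rw [show hankelPrev s (N+1) = hankel s N from rfl]
    have hI := identityI s N
    have hd0N := (h0 N).ne'
    have hd0N1 := (h0 (N+1)).ne'
    field_simp
    linear_combination hI

lemma sumQ (h0 : ∀ n, 0 < hankel s n) (ρ : Measure ℝ) [IsFiniteMeasure ρ]
    (hρ : IsMomentSolution s ρ) :
    ∀ N, ∑ n ∈ Finset.range (N+1), (Qn s ρ n 0)^2 = -hankelm2 s N / hankel s N := by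
  intro N
  induction N with
  | zero =>
    rw [Finset.sum_range_one, Qn_zero_sq s h0 ρ hρ, hankelm1_zero, hankelm2_zero]
    norm_num
  | succ N ih =>
    rw [Finset.sum_range_succ, ih, Qn_zero_sq s h0 ρ hρ]
    rw [show hankelPrev s (N+1) = hankel s N from rfl]
    have hI := identityIII s N
    have hd0N := (h0 N).ne'
    have hd0N1 := (h0 (N+1)).ne'
    field_simp
    linear_combination hI

lemma no_consec (h0 : ∀ n, 0 < hankel s n) (n : ℕ)
    (h1 : hankel1 s n = 0) (h2 : hankel1 s (n+1) = 0) : False := by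
  have hII := identityII s n
  rw [h1, h2] at hII
  have := h0 n
  nlinarith

end Scalars

theorem extended_stieltjes_formulas (s : ℕ → ℝ) (ρ : Measure ℝ)
    [IsProbabilityMeasure ρ] (hρ : IsMomentSolution s ρ)
    (h0 : ∀ n, 0 < hankel s n)
    (k : ℕ → ℕ) (hk0 : k 0 = 0) (hkmono : StrictMono k)
    (hkne : ∀ j, hankel1 s (k j) ≠ 0)
    (hkall : ∀ n, hankel1 s n ≠ 0 → ∃ j, k j = n)
    (l x ω υ : ℕ → ℝ)
    (hl : ∀ j, l j = (Pn s (k j) 0) ^ 2)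
    (hx : ∀ j, x j = ∑ i ∈ Finset.range (j + 1), l i)
    (hω : ∀ j, ω j = Qn s ρ (k j) 0 / Pn s (k j) 0
      - Qn s ρ (k (j + 1)) 0 / Pn s (k (j + 1)) 0)
    (hυ : ∀ j, υ j = if k (j + 1) = k j + 1 then 0 else (Qn s ρ (k j + 1) 0) ^ 2) :
    ∀ j : ℕ,
      x j = hankel2 s (k j) / hankel s (k j) ∧
      (∑ i ∈ Finset.range j, ω i) = -(hankelm1 s (k j)) / hankel1 s (k j) ∧
      (∫ t in Set.Ioc (0 : ℝ) (x j),
          (∑ i ∈ Finset.range (j + 1), if x i < t then ω i else 0) ^ 2) +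
        (∑ i ∈ Finset.range j, υ i) = -(hankelm2 s (k j)) / hankel s (k j) := by
  classical
  -- basic combinatorics of the index sequence k
  have hnotin : ∀ n, (∀ j', k j' ≠ n) → hankel1 s n = 0 := by
    intro n h
    by_contra hne
    obtain ⟨j', hj'⟩ := hkall n hne
    exact h j' hj'
  have hbetween : ∀ i n, k i < n → n < k (i+1) → hankel1 s n = 0 := by
    intro i n h1 h2
    apply hnotin
    intro j' hj'
    have hij : i < j' := hkmono.lt_iff_lt.mp (by omega)
    have hji : j' < i + 1 := hkmono.lt_iff_lt.mp (by omega)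
    omega
  have hgap : ∀ i, k (i+1) = k i + 1 ∨ k (i+1) = k i + 2 := by
    intro i
    by_contra hcon
    push_neg at hcon
    obtain ⟨h1, h2⟩ := hcon
    have hlt := hkmono (lt_add_one i)
    have e1 := hbetween i (k i + 1) (by omega) (by omega)
    have e2 := hbetween i (k i + 2) (by omega) (by omega)
    exact no_consec s h0 (k i + 1) e1 e2
  -- transfer of the P-sums
  have hSP : ∀ J, ∑ n ∈ Finset.range (k J + 1), (Pn s n 0)^2
      = ∑ i ∈ Finset.range (J+1), (Pn s (k i) 0)^2 := by
    intro J
    induction J with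
    | zero => simp [hk0]
    | succ J ih =>
      rcases hgap J with hg | hg
      · rw [show k (J+1) + 1 = (k J + 1) + 1 by omega,
          Finset.sum_range_succ (fun n => (Pn s n 0)^2) (k J + 1), ih,
          Finset.sum_range_succ (fun i => (Pn s (k i) 0)^2) (J+1),
          show k J + 1 = k (J+1) by omega]
      · have hz : Pn s (k J + 1) 0 = 0 :=
          Pn_zero_of_d1 s _ (hbetween J (k J + 1) (by omega) (by omega))
        rw [show k (J+1) + 1 = ((k J + 1) + 1) + 1 by omega,
          Finset.sum_range_succ (fun n => (Pn s n 0)^2) ((k J + 1) + 1),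
          Finset.sum_range_succ (fun n => (Pn s n 0)^2) (k J + 1), ih,
          Finset.sum_range_succ (fun i => (Pn s (k i) 0)^2) (J+1), hz,
          show k J + 1 + 1 = k (J+1) by omega]
        ring
  -- transfer of the Q-sums
  have hSQ : ∀ J, ∑ n ∈ Finset.range (k J + 1), (Qn s ρ n 0)^2
      = ∑ i ∈ Finset.range (J+1), (Qn s ρ (k i) 0)^2 + ∑ i ∈ Finset.range J, υ i := by
    intro J
    induction J with
    | zero => simp [hk0]
    | succ J ih =>
      rcases hgap J with hg | hg
      · rw [show k (J+1) + 1 = (k J + 1) + 1 by omega,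
          Finset.sum_range_succ (fun n => (Qn s ρ n 0)^2) (k J + 1), ih,
          Finset.sum_range_succ (fun i => (Qn s ρ (k i) 0)^2) (J+1),
          Finset.sum_range_succ υ J, hυ J, if_pos hg,
          show k J + 1 = k (J+1) by omega]
        ring
      · rw [show k (J+1) + 1 = ((k J + 1) + 1) + 1 by omega,
          Finset.sum_range_succ (fun n => (Qn s ρ n 0)^2) ((k J + 1) + 1),
          Finset.sum_range_succ (fun n => (Qn s ρ n 0)^2) (k J + 1), ih,
          Finset.sum_range_succ (fun i => (Qn s ρ (k i) 0)^2) (J+1),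
          Finset.sum_range_succ υ J, hυ J, if_neg (by omega),
          show k J + 1 + 1 = k (J+1) by omega]
        ring
  -- basic positivity
  have hq0 : Qn s ρ 0 0 = 0 := by
    rw [Qn_zero s ρ hρ, hankelm1_zero]; ring
  have hl_pos : ∀ i, 0 < l i := by
    intro i
    rw [hl]
    have hne := Pn_zero_ne s h0 (hkne i)
    positivity
  have hxmono : StrictMono x := by
    apply strictMono_nat_of_lt_succ
    intro i
    rw [hx i, hx (i+1), Finset.sum_range_succ l (i+1)]
    linarith [hl_pos (i+1)]
  have hxmono' : Monotone x := hxmono.monotone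
  have hx0 : 0 < x 0 := by
    rw [hx, Finset.sum_range_one]
    exact hl_pos 0
  have hxpos : ∀ i, 0 < x i := fun i => lt_of_lt_of_le hx0 (hxmono' (Nat.zero_le i))
  -- part 1
  have part1 : ∀ J, x J = hankel2 s (k J) / hankel s (k J) := by
    intro J
    rw [hx]
    rw [Finset.sum_congr rfl (fun i _ => hl i), ← hSP J, sumP s h0 (k J)]
  -- telescoping for part 2
  set F : ℕ → ℝ := fun i => Qn s ρ (k i) 0 / Pn s (k i) 0 with hF
  have htel : ∀ J, ∑ i ∈ Finset.range J, ω i = F 0 - F J := by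
    intro J
    rw [Finset.sum_congr rfl (fun i _ => hω i)]
    exact Finset.sum_range_sub' F J
  have hF0 : F 0 = 0 := by
    rw [hF]
    simp only
    rw [hk0, hq0, zero_div]
  have hFval : ∀ i, F i = hankelm1 s (k i) / hankel1 s (k i) :=
    fun i => PQ_ratio s h0 ρ hρ (k i)
  have part2 : ∀ J, ∑ i ∈ Finset.range J, ω i = -(hankelm1 s (k J)) / hankel1 s (k J) := by
    intro J
    rw [htel J, hF0, hFval J, zero_sub, neg_div]
  -- part 3: the integral
  have hconst : ∀ (N m : ℕ), m + 1 ≤ N + 1 → ∀ t, x m < t → t ≤ x (m+1) →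
      (∑ i ∈ Finset.range (N+1), if x i < t then ω i else 0)
        = ∑ i ∈ Finset.range (m+1), ω i := by
    intro N m hm t ht1 ht2
    have hzero : ∀ i ∈ Finset.range (N+1), i ∉ Finset.range (m+1) →
        (if x i < t then ω i else 0) = 0 := by
      intro i _ hni
      rw [Finset.mem_range, not_lt] at hni
      rw [if_neg (not_lt.mpr (le_trans ht2 (hxmono' (by omega : m + 1 ≤ i))))]
    rw [← Finset.sum_subset (Finset.range_subset_range.mpr hm) hzero]
    apply Finset.sum_congr rfl
    intro i hi
    rw [Finset.mem_range] at hi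
    rw [if_pos (lt_of_le_of_lt (hxmono' (by omega : i ≤ m)) ht1)]
  have hzero0 : ∀ (N : ℕ) (t : ℝ), t ≤ x 0 →
      (∑ i ∈ Finset.range (N+1), if x i < t then ω i else 0) = 0 := by
    intro N t ht
    apply Finset.sum_eq_zero
    intro i _
    rw [if_neg (not_lt.mpr (le_trans ht (hxmono' (Nat.zero_le i))))]
  have hmeas : ∀ N : ℕ, Measurable
      (fun t => (∑ i ∈ Finset.range (N+1), if x i < t then ω i else 0)^2) := by
    intro N
    apply Measurable.pow_const
    apply Finset.measurable_sum
    intro i _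
    have he : (fun t : ℝ => if x i < t then ω i else 0)
        = (Set.Ioi (x i)).indicator (fun _ => ω i) := by
      funext t
      by_cases h : x i < t
      · rw [if_pos h, Set.indicator_of_mem (Set.mem_Ioi.mpr h)]
      · rw [if_neg h, Set.indicator_of_notMem (by simpa using h)]
    rw [he]
    exact measurable_const.indicator measurableSet_Ioi
  have hintOn : ∀ (N : ℕ) (a b : ℝ), MeasureTheory.IntegrableOn
      (fun t => (∑ i ∈ Finset.range (N+1), if x i < t then ω i else 0)^2)
      (Set.Ioc a b) := by
    intro N a b
    apply MeasureTheory.Measure.integrableOn_of_bounded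
      (M := (∑ i ∈ Finset.range (N+1), |ω i|)^2) (measure_Ioc_lt_top).ne
      (hmeas N).aestronglyMeasurable
    filter_upwards with t
    have hb : |∑ i ∈ Finset.range (N+1), if x i < t then ω i else 0|
        ≤ ∑ i ∈ Finset.range (N+1), |ω i| := by
      refine le_trans (Finset.abs_sum_le_sum_abs _ _) (Finset.sum_le_sum ?_)
      intro i _
      by_cases hc : x i < t
      · rw [if_pos hc]
      · rw [if_neg hc]; simp [abs_nonneg]
    rw [Real.norm_eq_abs, abs_pow, ← sq_abs]
    exact pow_le_pow_left₀ (abs_nonneg _) (by rwa [abs_abs]) 2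
  have hINT : ∀ J, (∫ t in Set.Ioc (0:ℝ) (x J),
        (∑ i ∈ Finset.range (J+1), if x i < t then ω i else 0)^2)
      = ∑ m ∈ Finset.range J, (Qn s ρ (k (m+1)) 0)^2 := by
    intro J
    induction J with
    | zero =>
      rw [MeasureTheory.setIntegral_congr_fun measurableSet_Ioc
        (g := fun _ => (0:ℝ)) (fun t ht => by rw [hzero0 0 t ht.2]; norm_num)]
      simp
    | succ J ih =>
      have hsplit : Set.Ioc (0:ℝ) (x (J+1)) = Set.Ioc 0 (x J) ∪ Set.Ioc (x J) (x (J+1)) :=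
        (Set.Ioc_union_Ioc_eq_Ioc (le_of_lt (hxpos J))
          (le_of_lt (hxmono (lt_add_one J)))).symm
      rw [hsplit, MeasureTheory.setIntegral_union (Set.Ioc_disjoint_Ioc_of_le le_rfl)
        measurableSet_Ioc (hintOn _ _ _) (hintOn _ _ _)]
      have h1 : (∫ t in Set.Ioc (0:ℝ) (x J),
            (∑ i ∈ Finset.range (J+1+1), if x i < t then ω i else 0)^2)
          = ∫ t in Set.Ioc (0:ℝ) (x J),
            (∑ i ∈ Finset.range (J+1), if x i < t then ω i else 0)^2 := by
        apply MeasureTheory.setIntegral_congr_fun measurableSet_Ioc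
        intro t ht
        dsimp only
        have heq2 : (∑ i ∈ Finset.range (J+1+1), if x i < t then ω i else 0)
            = ∑ i ∈ Finset.range (J+1), if x i < t then ω i else 0 := by
          rw [Finset.sum_range_succ]
          rw [if_neg (not_lt.mpr (le_trans ht.2 (le_of_lt (hxmono (lt_add_one J)))))]
          ring
        rw [heq2]
      have h2 : (∫ t in Set.Ioc (x J) (x (J+1)),
            (∑ i ∈ Finset.range (J+1+1), if x i < t then ω i else 0)^2)
          = (Qn s ρ (k (J+1)) 0)^2 := by
        have heqon : Set.EqOn
            (fun t => (∑ i ∈ Finset.range (J+1+1), if x i < t then ω i else 0)^2)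
            (fun _ => (F (J+1))^2) (Set.Ioc (x J) (x (J+1))) := by
          intro t ht
          dsimp only
          have hcc := hconst (J+1) J (by omega) t ht.1 ht.2
          rw [hcc, htel (J+1), hF0, zero_sub, neg_pow]
          norm_num
        rw [MeasureTheory.setIntegral_congr_fun measurableSet_Ioc heqon]
        rw [MeasureTheory.setIntegral_const, smul_eq_mul]
        have hvol : (MeasureTheory.volume (Set.Ioc (x J) (x (J+1)))).toReal
            = l (J+1) := by
          rw [Real.volume_Ioc, ENNReal.toReal_ofReal (by linarith [hxmono (lt_add_one J)])]
          rw [hx (J+1), hx J, Finset.sum_range_succ]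
          ring
        have hFv : F (J+1) = Qn s ρ (k (J+1)) 0 / Pn s (k (J+1)) 0 := rfl
        rw [MeasureTheory.measureReal_def, hvol, hFv, hl (J+1), div_pow, mul_comm,
          div_mul_cancel₀ _ (pow_ne_zero 2 (Pn_zero_ne s h0 (hkne (J+1))))]
      rw [h1, ih, h2, Finset.sum_range_succ]
  -- assemble
  intro j
  refine ⟨part1 j, part2 j, ?_⟩
  rw [hINT j]
  have hshift : ∑ m ∈ Finset.range j, (Qn s ρ (k (m+1)) 0)^2
      = ∑ i ∈ Finset.range (j+1), (Qn s ρ (k i) 0)^2 - (Qn s ρ (k 0) 0)^2 := by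
    rw [Finset.sum_range_succ' (fun i => (Qn s ρ (k i) 0)^2) j]
    ring
  rw [hshift, hk0, hq0]
  have := hSQ j
  rw [sumQ s h0 ρ hρ (k j)] at this
  linarith [this]
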